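/- Let 1 ≤ r ≤ n, let (v_1,…,v_n) be an orthonormal basis of R^n, and let V = span(v_1+⋯+v_r, v_{r+1},…,v_n). Suppose nonzero vectors x, x_1,…,x_r ∈ R^n satisfy dist(x,V) ≤ δ and dist(x_j, v_j) ≤ δ for each j = 1,…,r, for some δ with 0 ≤ δ ≤ 1/(24r), and suppose x = a_1 x_1 + ⋯ + a_r x_r for some reals a_1,…,a_r. Then for each j = 1,…,r we have ‖x‖/(2√r) ≤ ‖a_j x_j‖ ≤ 2‖x‖/√r. -/

import Mathlib

open scoped BigOperators

noncomputable def projDist {n : ℕ} (x y : EuclideanSpace ℝ (Fin n)) : ℝ :=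
  Real.sqrt (‖x‖^2 * ‖y‖^2 - (inner ℝ x y : ℝ)^2) / (‖x‖ * ‖y‖)

noncomputable def distToSub {n : ℕ} (x : EuclideanSpace ℝ (Fin n))
    (V : Submodule ℝ (EuclideanSpace ℝ (Fin n))) : ℝ :=
  ‖((Vᗮ).orthogonalProjectionOnto x : EuclideanSpace ℝ (Fin n))‖ / ‖x‖

noncomputable def subDist {n : ℕ} (W V : Submodule ℝ (EuclideanSpace ℝ (Fin n))) : ℝ :=
  sSup {d : ℝ | ∃ x ∈ W, x ≠ 0 ∧ d = distToSub x V}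

noncomputable def gramVol {n : ℕ} {ι : Type*} [Fintype ι] [DecidableEq ι]
    (v : ι → EuclideanSpace ℝ (Fin n)) : ℝ :=
  Real.sqrt (Matrix.det (Matrix.of fun i j => (inner ℝ (v i) (v j) : ℝ)))

noncomputable def Theta {n : ℕ} {ι : Type*} [Fintype ι] [DecidableEq ι]
    (v : ι → EuclideanSpace ℝ (Fin n)) : ℝ :=
  gramVol v / ∏ i, ‖v i‖

def IsIntPt {n : ℕ} (x : EuclideanSpace ℝ (Fin n)) : Prop := ∀ i, ∃ k : ℤ, x i = (k : ℝ)

noncomputable def toE {n : ℕ} (x : Fin n → ℤ) : EuclideanSpace ℝ (Fin n) :=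
  (WithLp.equiv 2 (Fin n → ℝ)).symm (fun i => (x i : ℝ))

set_option maxHeartbeats 1000000 in
theorem stmt8 {n r : ℕ} (hr : 1 ≤ r) (hrn : r ≤ n)
    (b : OrthonormalBasis (Fin n) ℝ (EuclideanSpace ℝ (Fin n)))
    (V : Submodule ℝ (EuclideanSpace ℝ (Fin n)))
    (hV : V = Submodule.span ℝ
      (insert (∑ i ∈ Finset.univ.filter (fun i : Fin n => (i : ℕ) < r), b i)
        (b '' {i : Fin n | r ≤ (i : ℕ)})))
    (δ : ℝ) (hδ0 : 0 ≤ δ) (hδ : δ ≤ 1 / (24 * r))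
    (x : EuclideanSpace ℝ (Fin n)) (hx : x ≠ 0)
    (xs : Fin r → EuclideanSpace ℝ (Fin n)) (hxs : ∀ j, xs j ≠ 0)
    (hdV : distToSub x V ≤ δ)
    (hd : ∀ j : Fin r, projDist (xs j) (b (Fin.castLE hrn j)) ≤ δ)
    (a : Fin r → ℝ) (hsum : x = ∑ j, a j • xs j) :
    ∀ j : Fin r, ‖x‖ / (2 * Real.sqrt r) ≤ ‖a j • xs j‖ ∧
      ‖a j • xs j‖ ≤ 2 * ‖x‖ / Real.sqrt r := by
  have hbo := b.orthonormal
  set c : Fin r → Fin n := Fin.castLE hrn with hcdef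
  have hcinj : Function.Injective c := Fin.castLE_injective hrn
  have hbc : Orthonormal ℝ (fun k => b (c k)) := hbo.comp c hcinj
  set p : Fin r → ℝ := fun j => (inner ℝ (xs j) (b (c j)) : ℝ) with hpdef
  set w : Fin r → EuclideanSpace ℝ (Fin n) := fun j => xs j - p j • b (c j) with hwdef
  set m : Fin r → ℝ := fun j => ‖a j • xs j‖ with hmdef
  set u : Fin r → ℝ := fun j => a j * p j with hudef
  set t : Fin r → ℝ := fun j => (inner ℝ x (b (c j)) : ℝ) with htdef
  set S : ℝ := ∑ k, m k with hSdef
  have hb1 : ∀ i, ‖b i‖ = 1 := fun i => hbo.1 i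
  have hite : ∀ i i' : Fin n, (inner ℝ (b i) (b i') : ℝ) = if i = i' then 1 else 0 :=
    fun i i' => orthonormal_iff_ite.mp hbo i i'
  -- numeric facts about δ and r
  have hr1 : (1:ℝ) ≤ (r:ℝ) := by exact_mod_cast hr
  have hrpos : (0:ℝ) < (r:ℝ) := by linarith
  have hδr : δ * (r:ℝ) ≤ 1 / 24 := by
    have h := mul_le_mul_of_nonneg_right hδ hrpos.le
    have h2 : (1 / (24 * (r:ℝ))) * (r:ℝ) = 1/24 := by field_simp
    rw [h2] at h
    exact h
  have hδ1 : δ ≤ 1/24 := by nlinarith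
  have hxpos : 0 < ‖x‖ := norm_pos_iff.mpr hx
  have hq1 : (1:ℝ) ≤ Real.sqrt r := by
    rw [show (1:ℝ) = Real.sqrt 1 by simp]
    exact Real.sqrt_le_sqrt hr1
  have hqpos : (0:ℝ) < Real.sqrt r := by linarith
  have hqq : Real.sqrt r * Real.sqrt r = (r:ℝ) := Real.mul_self_sqrt hrpos.le
  -- basic facts about m
  have hm_eq : ∀ j, m j = |a j| * ‖xs j‖ := by
    intro j
    rw [hmdef]
    simp [norm_smul, Real.norm_eq_abs]
  have hm_nonneg : ∀ j, 0 ≤ m j := fun j => norm_nonneg _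
  -- facts about w and p
  have hwsq : ∀ j, ‖w j‖^2 = ‖xs j‖^2 - (p j)^2 := by
    intro j
    have h1 : ‖b (c j)‖ = 1 := hb1 (c j)
    have h2 : (inner ℝ (xs j) ((p j) • b (c j)) : ℝ) = p j * p j := by
      rw [real_inner_smul_right]
    have h3 : w j = xs j - p j • b (c j) := rfl
    rw [h3, @norm_sub_sq_real, h2, norm_smul, h1]
    simp [Real.norm_eq_abs, sq_abs]
    ring
  have hwle : ∀ j, ‖w j‖ ≤ δ * ‖xs j‖ := by
    intro j
    have hxp : 0 < ‖xs j‖ := norm_pos_iff.mpr (hxs j)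
    have hdj := hd j
    rw [projDist, hb1 (c j)] at hdj
    have h3 : Real.sqrt (‖xs j‖^2 * 1^2 - (p j)^2) ≤ δ * ‖xs j‖ := by
      rw [div_le_iff₀ (by positivity)] at hdj
      calc Real.sqrt (‖xs j‖^2 * 1^2 - (p j)^2) ≤ δ * (‖xs j‖ * 1) := hdj
        _ = δ * ‖xs j‖ := by ring
    have h4 : ‖xs j‖^2 * 1^2 - (p j)^2 = ‖w j‖^2 := by rw [hwsq j]; ring
    rw [h4, Real.sqrt_sq (norm_nonneg _)] at h3
    exact h3
  have hp_low : ∀ j, (1 - δ) * ‖xs j‖ ≤ |p j| := by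
    intro j
    have h1 := hwsq j
    have h2 := hwle j
    have h3 : ‖w j‖^2 ≤ (δ * ‖xs j‖)^2 := by
      nlinarith [norm_nonneg (w j), norm_nonneg (xs j)]
    nlinarith [sq_abs (p j), abs_nonneg (p j), norm_nonneg (xs j),
      mul_nonneg (mul_nonneg hδ0 hδ0) (sq_nonneg (‖xs j‖)),
      mul_nonneg hδ0 (by linarith : (0:ℝ) ≤ 1 - δ),
      mul_nonneg (by linarith : (0:ℝ) ≤ 1 - δ) (norm_nonneg (xs j)),
      sq_nonneg (‖xs j‖)]
  have hp_up : ∀ j, |p j| ≤ ‖xs j‖ := by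
    intro j
    have := abs_real_inner_le_norm (xs j) (b (c j))
    rw [hb1 (c j)] at this
    simpa using this
  -- |u j| bounds in terms of m j
  have hu_up : ∀ j, |u j| ≤ m j := by
    intro j
    rw [hudef, hm_eq j]
    simp only [abs_mul]
    exact mul_le_mul_of_nonneg_left (hp_up j) (abs_nonneg _)
  have hu_low : ∀ j, (1 - δ) * m j ≤ |u j| := by
    intro j
    rw [hudef, hm_eq j]
    simp only [abs_mul]
    calc (1 - δ) * (|a j| * ‖xs j‖) = |a j| * ((1 - δ) * ‖xs j‖) := by ring
      _ ≤ |a j| * |p j| := mul_le_mul_of_nonneg_left (hp_low j) (abs_nonneg _)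
  -- t close across coordinates (using V)
  have hcmem : ∀ j : Fin r, c j ∈ Finset.univ.filter (fun i : Fin n => (i : ℕ) < r) := by
    intro j
    simp [hcdef, Finset.mem_filter, j.isLt]
  have hinner_s : ∀ j : Fin r,
      (inner ℝ (∑ i ∈ Finset.univ.filter (fun i : Fin n => (i : ℕ) < r), b i) (b (c j)) : ℝ) = 1 := by
    intro j
    rw [sum_inner]
    rw [Finset.sum_congr rfl (fun i _ => hite i (c j))]
    rw [Finset.sum_ite_eq' _ (c j) (fun _ => (1:ℝ))]
    simp [hcmem j]
  have hzmem : ∀ j k : Fin r, b (c j) - b (c k) ∈ Vᗮ := by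
    intro j k
    rw [hV, Submodule.mem_orthogonal]
    intro y hy
    induction hy using Submodule.span_induction with
    | mem y hy =>
      rcases hy with hy | ⟨i, hi, rfl⟩
      · subst hy
        rw [inner_sub_right, hinner_s j, hinner_s k]
        ring
      · have hij : i ≠ c j := by
          intro h
          have h2 : (c j : ℕ) < r := j.isLt
          rw [← h] at h2
          exact absurd hi (by simpa using h2.not_ge)
        have hik : i ≠ c k := by
          intro h
          have h2 : (c k : ℕ) < r := k.isLt
          rw [← h] at h2
          exact absurd hi (by simpa using h2.not_ge)
        rw [inner_sub_right, hite i (c j), hite i (c k)]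
        simp [hij, hik]
    | zero => simp
    | add y z _ _ ihy ihz => rw [inner_add_left, ihy, ihz]; ring
    | smul s y _ ih => rw [inner_smul_left, ih]; simp
  have hP : ‖(Vᗮ.orthogonalProjectionOnto x : EuclideanSpace ℝ (Fin n))‖ ≤ δ * ‖x‖ := by
    rw [distToSub, div_le_iff₀ hxpos] at hdV
    linarith
  have ht_close : ∀ j k : Fin r, |t j - t k| ≤ 2 * δ * ‖x‖ := by
    intro j k
    have hz := hzmem j k
    have h0 : (inner ℝ (x - (Vᗮ.orthogonalProjectionOnto x : EuclideanSpace ℝ (Fin n))) (b (c j) - b (c k)) : ℝ) = 0 :=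
      Submodule.starProjection_inner_eq_zero (K := Vᗮ) x _ hz
    have heq : (inner ℝ x (b (c j) - b (c k)) : ℝ) =
        (inner ℝ ((Vᗮ.orthogonalProjectionOnto x : EuclideanSpace ℝ (Fin n))) (b (c j) - b (c k)) : ℝ) := by
      have h5 := inner_sub_left (𝕜 := ℝ) x ((Vᗮ.orthogonalProjectionOnto x : EuclideanSpace ℝ (Fin n)))
        (b (c j) - b (c k))
      rw [h0] at h5
      linarith
    have hnz : ‖b (c j) - b (c k)‖ ≤ 2 := by
      calc ‖b (c j) - b (c k)‖ ≤ ‖b (c j)‖ + ‖b (c k)‖ := norm_sub_le _ _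
        _ = 2 := by rw [hb1, hb1]; norm_num
    have hCS := abs_real_inner_le_norm ((Vᗮ.orthogonalProjectionOnto x : EuclideanSpace ℝ (Fin n)))
      (b (c j) - b (c k))
    have h2 : |(inner ℝ x (b (c j) - b (c k)) : ℝ)| ≤ 2 * δ * ‖x‖ := by
      rw [heq]
      calc |(inner ℝ ((Vᗮ.orthogonalProjectionOnto x : EuclideanSpace ℝ (Fin n))) (b (c j) - b (c k)) : ℝ)|
          ≤ ‖(Vᗮ.orthogonalProjectionOnto x : EuclideanSpace ℝ (Fin n))‖ * ‖b (c j) - b (c k)‖ := hCS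
        _ ≤ (δ * ‖x‖) * 2 := mul_le_mul hP hnz (norm_nonneg _) (by positivity)
        _ = 2 * δ * ‖x‖ := by ring
    rw [inner_sub_right] at h2
    exact h2
  -- decompose x
  have hxs_decomp : ∀ k, a k • xs k = u k • b (c k) + a k • w k := by
    intro k
    have : w k = xs k - p k • b (c k) := rfl
    rw [this, smul_sub, smul_smul]
    abel
  have hxX : x = (∑ k, u k • b (c k)) + ∑ k, a k • w k := by
    rw [hsum, ← Finset.sum_add_distrib]
    exact Finset.sum_congr rfl (fun k _ => hxs_decomp k)
  -- t j = u j + error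
  have ht_eq : ∀ j, t j = u j + ∑ k, a k * (inner ℝ (w k) (b (c j)) : ℝ) := by
    intro j
    have h1 : t j = (inner ℝ ((∑ k, u k • b (c k)) + ∑ k, a k • w k) (b (c j)) : ℝ) := by
      rw [htdef]; rw [← hxX]
    rw [h1, inner_add_left]
    congr 1
    · exact hbc.inner_left_fintype u j
    · rw [sum_inner]
      exact Finset.sum_congr rfl (fun k _ => real_inner_smul_left _ _ _)
  have hwb : ∀ k j : Fin r, |(inner ℝ (w k) (b (c j)) : ℝ)| ≤ δ * ‖xs k‖ := by
    intro k j
    calc |(inner ℝ (w k) (b (c j)) : ℝ)| ≤ ‖w k‖ * ‖b (c j)‖ := abs_real_inner_le_norm _ _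
      _ = ‖w k‖ := by rw [hb1]; ring
      _ ≤ δ * ‖xs k‖ := hwle k
  have h_tu : ∀ j, |t j - u j| ≤ δ * S := by
    intro j
    rw [ht_eq j]
    have h1 : |u j + (∑ k, a k * (inner ℝ (w k) (b (c j)) : ℝ)) - u j|
        = |∑ k, a k * (inner ℝ (w k) (b (c j)) : ℝ)| := by congr 1; ring
    rw [h1]
    calc |∑ k, a k * (inner ℝ (w k) (b (c j)) : ℝ)|
        ≤ ∑ k, |a k * (inner ℝ (w k) (b (c j)) : ℝ)| := Finset.abs_sum_le_sum_abs _ _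
      _ ≤ ∑ k, δ * m k := by
          apply Finset.sum_le_sum
          intro k _
          rw [abs_mul, hm_eq k]
          calc |a k| * |(inner ℝ (w k) (b (c j)) : ℝ)| ≤ |a k| * (δ * ‖xs k‖) :=
                mul_le_mul_of_nonneg_left (hwb k j) (abs_nonneg _)
            _ = δ * (|a k| * ‖xs k‖) := by ring
      _ = δ * S := by rw [hSdef, Finset.mul_sum]
  -- max index
  obtain ⟨J, -, hJ⟩ := Finset.exists_max_image Finset.univ m ⟨⟨0, hr⟩, Finset.mem_univ _⟩
  have hJ' : ∀ k, m k ≤ m J := fun k => hJ k (Finset.mem_univ k)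
  have hS_le : S ≤ (r:ℝ) * m J := by
    rw [hSdef]
    calc ∑ k, m k ≤ ∑ _k : Fin r, m J := Finset.sum_le_sum (fun k _ => hJ' k)
      _ = (r:ℝ) * m J := by simp [Finset.sum_const, Finset.card_univ, mul_comm]
  have hxS : ‖x‖ ≤ S := by
    rw [hSdef, hsum]
    exact norm_sum_le _ _
  have hS_nonneg : 0 ≤ S := Finset.sum_nonneg (fun k _ => hm_nonneg k)
  have hMpos : 0 < m J := by
    by_contra h
    push_neg at h
    have h1 : (r:ℝ) * m J ≤ 0 := mul_nonpos_iff.mpr (Or.inl ⟨hrpos.le, h⟩)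
    linarith
  -- u's are close to each other
  have hu_close : ∀ j k : Fin r, |u j - u k| ≤ 4 * δ * S := by
    intro j k
    have h1 := h_tu j
    have h2 := h_tu k
    have h3 := ht_close j k
    have h4 : |u j - u k| ≤ |t j - u j| + |t j - t k| + |t k - u k| := by
      have := abs_sub_abs_le_abs_sub (u j) (u k)
      calc |u j - u k| = |(u j - t j) + (t j - t k) + (t k - u k)| := by congr 1; ring
        _ ≤ |(u j - t j) + (t j - t k)| + |t k - u k| := abs_add_le _ _
        _ ≤ |u j - t j| + |t j - t k| + |t k - u k| := by
            have := abs_add_le (u j - t j) (t j - t k)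
            linarith
        _ = |t j - u j| + |t j - t k| + |t k - u k| := by rw [abs_sub_comm (u j) (t j)]
    have h5 : 2 * δ * ‖x‖ ≤ 2 * δ * S := by
      apply mul_le_mul_of_nonneg_left hxS (by linarith)
    linarith
  -- all |u j| and m j are large
  have hu_big : ∀ j, (19/24) * m J ≤ |u j| := by
    intro j
    have h1 := hu_close J j
    have h2 := hu_low J
    have h3 : |u J| - |u j| ≤ |u J - u j| := by
      have := abs_sub_abs_le_abs_sub (u J) (u j)
      linarith
    have h4 : δ * S ≤ δ * ((r:ℝ) * m J) := mul_le_mul_of_nonneg_left hS_le hδ0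
    have h5 : δ * ((r:ℝ) * m J) ≤ (1/24) * m J := by nlinarith
    have h6 : δ * m J ≤ δ * ((r:ℝ) * m J) := by
      nlinarith [mul_nonneg (mul_nonneg hδ0 hMpos.le) (sub_nonneg.mpr hr1)]
    linarith
  have hm_big : ∀ j, (19/24) * m J ≤ m j := fun j => le_trans (hu_big j) (hu_up j)
  -- upper bound for ‖x‖
  have hδS : δ * S ≤ (1/24) * m J := by nlinarith [mul_le_mul_of_nonneg_left hS_le hδ0]
  have hnorm_u : ‖∑ k, u k • b (c k)‖ ≤ Real.sqrt r * m J := by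
    have h2 : ‖∑ k, u k • b (c k)‖^2 = ∑ k, (u k)^2 := by
      rw [← real_inner_self_eq_norm_sq]
      rw [hbc.inner_sum u u Finset.univ]
      simp [sq]
    have h3 : ∑ k, (u k)^2 ≤ (r:ℝ) * (m J)^2 := by
      calc ∑ k, (u k)^2 ≤ ∑ _k : Fin r, (m J)^2 := by
            apply Finset.sum_le_sum
            intro k _
            nlinarith [hu_up k, hJ' k, abs_nonneg (u k), sq_abs (u k), hm_nonneg k]
        _ = (r:ℝ) * (m J)^2 := by simp [Finset.sum_const, Finset.card_univ, mul_comm]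
    have h4 : ‖∑ k, u k • b (c k)‖^2 ≤ (Real.sqrt r * m J)^2 := by
      rw [h2]
      calc ∑ k, (u k)^2 ≤ (r:ℝ) * (m J)^2 := h3
        _ = (Real.sqrt r * m J)^2 := by rw [mul_pow, Real.sq_sqrt hrpos.le]
    have h5 := Real.sqrt_le_sqrt h4
    rwa [Real.sqrt_sq (norm_nonneg _), Real.sqrt_sq (by positivity)] at h5
  have hnorm_w : ‖∑ k, a k • w k‖ ≤ δ * S := by
    calc ‖∑ k, a k • w k‖ ≤ ∑ k, ‖a k • w k‖ := norm_sum_le _ _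
      _ ≤ ∑ k, δ * m k := by
          apply Finset.sum_le_sum
          intro k _
          rw [norm_smul, Real.norm_eq_abs, hm_eq k]
          calc |a k| * ‖w k‖ ≤ |a k| * (δ * ‖xs k‖) :=
                mul_le_mul_of_nonneg_left (hwle k) (abs_nonneg _)
            _ = δ * (|a k| * ‖xs k‖) := by ring
      _ = δ * S := by rw [hSdef, Finset.mul_sum]
  have hx_up : ‖x‖ ≤ (25/24) * (Real.sqrt r * m J) := by
    have h1 : ‖x‖ ≤ ‖∑ k, u k • b (c k)‖ + ‖∑ k, a k • w k‖ := by
      rw [hxX]; exact norm_add_le _ _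
    have h2 : (1/24) * m J ≤ (1/24) * (Real.sqrt r * m J) := by nlinarith
    linarith
  -- lower bound for ‖x‖
  set σ : Fin r → ℝ := fun k => if 0 ≤ u k then 1 else -1 with hσdef
  have hσu : ∀ k, σ k * u k = |u k| := by
    intro k
    rw [hσdef]
    by_cases h : 0 ≤ u k
    · simp [h, abs_of_nonneg h]
    · push_neg at h
      simp [not_le.mpr h, abs_of_neg h]
  have hσsq : ∀ k, σ k * σ k = 1 := by
    intro k
    rw [hσdef]
    by_cases h : 0 ≤ u k <;> simp [h]
  have hσabs : ∀ k, |σ k| = 1 := by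
    intro k
    rw [hσdef]
    by_cases h : 0 ≤ u k <;> simp [h]
  have he_norm : ‖∑ k, σ k • b (c k)‖ = Real.sqrt r := by
    have h2 : ‖∑ k, σ k • b (c k)‖^2 = ∑ k, σ k * σ k := by
      rw [← real_inner_self_eq_norm_sq]
      rw [hbc.inner_sum σ σ Finset.univ]
      simp
    have h3 : ‖∑ k, σ k • b (c k)‖^2 = (r:ℝ) := by
      rw [h2, Finset.sum_congr rfl (fun k _ => hσsq k)]
      simp
    rw [← h3, Real.sqrt_sq (norm_nonneg _)]
  have hxe : (inner ℝ x (∑ k, σ k • b (c k)) : ℝ) = ∑ k, σ k * t k := by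
    rw [inner_sum]
    exact Finset.sum_congr rfl (fun k _ => real_inner_smul_right _ _ _)
  have hterm : ∀ k, (19/24) * m J - δ * S ≤ σ k * t k := by
    intro k
    have h1 : σ k * t k = |u k| + σ k * (t k - u k) := by
      rw [← hσu k]; ring
    have h2 : |σ k * (t k - u k)| ≤ δ * S := by
      rw [abs_mul, hσabs k, one_mul]
      exact h_tu k
    have h3 := hu_big k
    have h4 := abs_le.mp h2
    linarith
  have hsum_low : (r:ℝ) * ((19/24) * m J - δ * S) ≤ ∑ k, σ k * t k := by
    calc (r:ℝ) * ((19/24) * m J - δ * S) = ∑ _k : Fin r, ((19/24) * m J - δ * S) := by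
          simp [Finset.sum_const, Finset.card_univ, mul_comm]; ring
      _ ≤ ∑ k, σ k * t k := Finset.sum_le_sum (fun k _ => hterm k)
  have hx_low : (3/4) * (Real.sqrt r * m J) ≤ ‖x‖ := by
    have h1 : (inner ℝ x (∑ k, σ k • b (c k)) : ℝ) ≤ ‖x‖ * Real.sqrt r := by
      calc (inner ℝ x (∑ k, σ k • b (c k)) : ℝ) ≤ ‖x‖ * ‖∑ k, σ k • b (c k)‖ :=
            real_inner_le_norm _ _
        _ = ‖x‖ * Real.sqrt r := by rw [he_norm]
    have h2 : (r:ℝ) * ((19/24) * m J - δ * S) ≤ ‖x‖ * Real.sqrt r := by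
      rw [← hxe] at hsum_low
      linarith
    have h3 : (3/4) * (r:ℝ) * m J ≤ (r:ℝ) * ((19/24) * m J - δ * S) := by
      have : (r:ℝ) * (δ * S) ≤ (r:ℝ) * ((1/24) * m J) :=
        mul_le_mul_of_nonneg_left hδS hrpos.le
      nlinarith
    have h4 : (3/4) * (r:ℝ) * m J ≤ ‖x‖ * Real.sqrt r := by linarith
    by_contra hcon
    push_neg at hcon
    have h5 : ‖x‖ * Real.sqrt r < (3/4) * (Real.sqrt r * m J) * Real.sqrt r :=
      mul_lt_mul_of_pos_right hcon hqpos
    have h6 : (3/4) * (Real.sqrt r * m J) * Real.sqrt r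
        = (3/4) * (Real.sqrt r * Real.sqrt r) * m J := by ring
    rw [hqq] at h6
    linarith
  -- conclusion
  intro j
  have hmj_big := hm_big j
  have hmj_up := hJ' j
  constructor
  · rw [div_le_iff₀ (by positivity)]
    show ‖x‖ ≤ m j * (2 * Real.sqrt r)
    linarith [mul_le_mul_of_nonneg_right hmj_big hqpos.le, hx_up,
      mul_nonneg hMpos.le hqpos.le]
  · rw [le_div_iff₀ hqpos]
    show m j * Real.sqrt r ≤ 2 * ‖x‖
    linarith [mul_le_mul_of_nonneg_right hmj_up hqpos.le, hx_low]
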